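/- Let ψ and σ be density matrices on ℂ^N, and suppose σ is flat (σ² = σ / rank(σ)). Let T = (1/2)‖ψ − σ‖₁ be the trace distance between ψ and σ. Then the anti-flatness of ψ satisfies F(ψ) = Tr(ψ³) − (Tr(ψ²))² ≤ 8T. Consequently the anti-flatness of any density matrix is at most 8 times its minimal trace distance to the set of flat density matrices. -/

import Mathlib

open scoped BigOperators ComplexOrder

/-- The trace norm `‖A‖₁ = Tr√(AᴴA)`, computed as the sum of the square roots of the
eigenvalues of the positive semidefinite matrix `AᴴA`. -/
noncomputable def traceNorm {n : Type*} [Fintype n] [DecidableEq n]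
    (A : Matrix n n ℂ) : ℝ :=
  ∑ i, Real.sqrt ((Matrix.posSemidef_conjTranspose_mul_self A).1.eigenvalues i)

/-- The anti-flatness `F(ρ) = Tr(ρ³) − (Tr(ρ²))²` of a density matrix `ρ`
(the traces are real for Hermitian `ρ`). -/
noncomputable def antiFlatness {n : Type*} [Fintype n] [DecidableEq n]
    (ρ : Matrix n n ℂ) : ℝ :=
  ((ρ ^ 3).trace).re - (((ρ ^ 2).trace).re) ^ 2

namespace AntiFlatAux

open Matrix

set_option linter.unusedSectionVars false

variable {n : Type*} [Fintype n] [DecidableEq n]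

lemma trace_conj_diag (V : Matrix n n ℂ) (hV : star V * V = 1) (d : n → ℂ) :
    (V * diagonal d * star V).trace = ∑ i, d i := by
  rw [trace_mul_cycle, hV, one_mul, trace_diagonal]

lemma trace_spectral {A : Matrix n n ℂ} (hA : A.IsHermitian) :
    A.trace = ∑ i, (hA.eigenvalues i : ℂ) := by
  conv_lhs => rw [hA.spectral_theorem]
  rw [Unitary.conjStarAlgAut_apply, trace_conj_diag _ (Unitary.coe_star_mul_self hA.eigenvectorUnitary)]
  rfl

lemma eigen_le_one {ρ : Matrix n n ℂ} (hρ : ρ.PosSemidef) (htr : ρ.trace = 1) (i : n) :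
    hρ.1.eigenvalues i ≤ 1 := by
  have hsum : ∑ j, hρ.1.eigenvalues j = 1 := by
    have := trace_spectral hρ.1
    rw [htr] at this
    have : ((∑ j, hρ.1.eigenvalues j : ℝ) : ℂ) = 1 := by push_cast; rw [← this]
    exact_mod_cast this
  calc hρ.1.eigenvalues i ≤ ∑ j, hρ.1.eigenvalues j :=
        Finset.single_le_sum (fun j _ => hρ.eigenvalues_nonneg j) (Finset.mem_univ i)
    _ = 1 := hsum

lemma one_sub_posSemidef {ρ : Matrix n n ℂ} (hρ : ρ.PosSemidef) (htr : ρ.trace = 1) :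
    (1 - ρ).PosSemidef := by
  set V : Matrix n n ℂ := (hρ.1.eigenvectorUnitary : Matrix n n ℂ) with hVdef
  have hV2 : V * star V = 1 := Unitary.coe_mul_star_self hρ.1.eigenvectorUnitary
  have key : 1 - ρ = V * diagonal (fun i => ((1 - hρ.1.eigenvalues i : ℝ) : ℂ)) * star V := by
    have : diagonal (fun i => ((1 - hρ.1.eigenvalues i : ℝ) : ℂ))
        = 1 - diagonal (RCLike.ofReal ∘ hρ.1.eigenvalues) := by
      rw [← diagonal_one, diagonal_sub]
      congr 1 with i
      simp
    rw [this, mul_sub, sub_mul, mul_one, hV2]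
    conv_lhs => rw [hρ.1.spectral_theorem, Unitary.conjStarAlgAut_apply]
  rw [key]
  rw [show star V = Vᴴ from rfl]
  exact PosSemidef.mul_mul_conjTranspose_same
      (posSemidef_diagonal_iff.mpr fun i => by
        rw [Complex.zero_le_real]; linarith [eigen_le_one hρ htr i]) V

lemma sub_sq_posSemidef {ρ : Matrix n n ℂ} (hρ : ρ.PosSemidef) (htr : ρ.trace = 1) :
    (ρ - ρ * ρ).PosSemidef := by
  set V : Matrix n n ℂ := (hρ.1.eigenvectorUnitary : Matrix n n ℂ) with hVdef
  have hV1 : star V * V = 1 := Unitary.coe_star_mul_self hρ.1.eigenvectorUnitary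
  have hsq : ρ * ρ = V * diagonal (fun i => ((hρ.1.eigenvalues i : ℂ) ^ 2)) * star V := by
    conv_lhs => rw [hρ.1.spectral_theorem, Unitary.conjStarAlgAut_apply]
    rw [← hVdef]
    have : (V * diagonal (RCLike.ofReal ∘ hρ.1.eigenvalues) * star V) *
        (V * diagonal (RCLike.ofReal ∘ hρ.1.eigenvalues) * star V)
        = V * (diagonal (RCLike.ofReal ∘ hρ.1.eigenvalues) * ((star V * V) *
          diagonal (RCLike.ofReal ∘ hρ.1.eigenvalues))) * star V := by
      simp only [mul_assoc]
    rw [this, hV1, one_mul, diagonal_mul_diagonal]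
    congr 2 with i
    simp [sq]
  have key : ρ - ρ * ρ = V * diagonal
      (fun i => ((hρ.1.eigenvalues i - hρ.1.eigenvalues i ^ 2 : ℝ) : ℂ)) * star V := by
    have hd : diagonal (fun i => ((hρ.1.eigenvalues i - hρ.1.eigenvalues i ^ 2 : ℝ) : ℂ))
        = diagonal (RCLike.ofReal ∘ hρ.1.eigenvalues)
          - diagonal (fun i => ((hρ.1.eigenvalues i : ℂ) ^ 2)) := by
      rw [diagonal_sub]; congr 1 with i; push_cast; rfl
    rw [hd, mul_sub, sub_mul, ← hsq]
    congr 1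
    conv_lhs => rw [hρ.1.spectral_theorem, Unitary.conjStarAlgAut_apply]
  rw [key, show star V = Vᴴ from rfl]
  refine PosSemidef.mul_mul_conjTranspose_same
    (posSemidef_diagonal_iff.mpr fun i => ?_) V
  rw [Complex.zero_le_real]
  nlinarith [hρ.eigenvalues_nonneg i, eigen_le_one hρ htr i]

lemma re_trace_nonneg {A : Matrix n n ℂ} (hA : A.PosSemidef) : 0 ≤ A.trace.re := by
  rw [trace_spectral hA.1]
  rw [Complex.re_sum]
  exact Finset.sum_nonneg fun i _ => by
    simpa using hA.eigenvalues_nonneg i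

open MatrixOrder in
lemma traceNorm_hermitian {D : Matrix n n ℂ} (hD : D.IsHermitian) :
    traceNorm D = ∑ i, |hD.eigenvalues i| := by
  set hM := Matrix.posSemidef_conjTranspose_mul_self D with hMdef
  set V : Matrix n n ℂ := (hD.eigenvectorUnitary : Matrix n n ℂ) with hVdef
  have hV1 : star V * V = 1 := Unitary.coe_star_mul_self hD.eigenvectorUnitary
  set S : Matrix n n ℂ := V * diagonal (fun i => ((|hD.eigenvalues i| : ℝ) : ℂ)) * star V
    with hSdef
  have hS : S.PosSemidef := by
    rw [hSdef, show star V = Vᴴ from rfl]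
    exact PosSemidef.mul_mul_conjTranspose_same
      (posSemidef_diagonal_iff.mpr fun i => by rw [Complex.zero_le_real]; positivity) V
  have hSsq : S ^ 2 = Dᴴ * D := by
    rw [hD.eq, sq, hSdef]
    have : (V * diagonal (fun i => ((|hD.eigenvalues i| : ℝ) : ℂ)) * star V) *
        (V * diagonal (fun i => ((|hD.eigenvalues i| : ℝ) : ℂ)) * star V)
        = V * (diagonal (fun i => ((|hD.eigenvalues i| : ℝ) : ℂ)) * ((star V * V) *
          diagonal (fun i => ((|hD.eigenvalues i| : ℝ) : ℂ)))) * star V := by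
      simp only [mul_assoc]
    rw [this, hV1, one_mul, diagonal_mul_diagonal]
    conv_rhs => rw [hD.spectral_theorem, Unitary.conjStarAlgAut_apply]
    rw [← hVdef]
    have : (V * diagonal (RCLike.ofReal ∘ hD.eigenvalues) * star V) *
        (V * diagonal (RCLike.ofReal ∘ hD.eigenvalues) * star V)
        = V * (diagonal (RCLike.ofReal ∘ hD.eigenvalues) * ((star V * V) *
          diagonal (RCLike.ofReal ∘ hD.eigenvalues))) * star V := by
      simp only [mul_assoc]
    rw [this, hV1, one_mul, diagonal_mul_diagonal]
    congr 2 with i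
    simp only [Function.comp_apply, diagonal_apply]
    split <;> [skip; rfl]
    rw [show (RCLike.ofReal : ℝ → ℂ) = Complex.ofReal from rfl]
    rw [← Complex.ofReal_mul, ← Complex.ofReal_mul, abs_mul_abs_self]
  have hSrt : S = CFC.sqrt (Dᴴ * D) := by
    exact (CFC.sqrt_unique (by rw [← sq]; exact hSsq) hS.nonneg).symm
  have h1 : S.trace = ((∑ i, |hD.eigenvalues i| : ℝ) : ℂ) := by
    rw [hSdef, trace_conj_diag V hV1]
    push_cast
    rfl
  have h2 : (CFC.sqrt (Dᴴ * D)).trace = ((traceNorm D : ℝ) : ℂ) := by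
    rw [CFC.sqrt_eq_cfc, cfc_nnreal_eq_real _ (Dᴴ * D), hM.1.cfc_eq,
      IsHermitian.cfc, Unitary.conjStarAlgAut_apply,
      trace_conj_diag _ (Unitary.coe_star_mul_self hM.1.eigenvectorUnitary)]
    rw [traceNorm]
    push_cast
    refine Finset.sum_congr rfl fun i _ => ?_
    simp [max_eq_left (hM.eigenvalues_nonneg i)]
  have := h1.symm.trans (hSrt ▸ h2)
  exact_mod_cast this.symm

lemma re_trace_mul_le {D : Matrix n n ℂ} (B : Matrix n n ℂ) (hD : D.IsHermitian) {m : ℝ}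
    (hB : ∀ u : n → ℂ, star u ⬝ᵥ u = 1 → |(star u ⬝ᵥ B *ᵥ u).re| ≤ m) :
    |((B * D).trace).re| ≤ m * ∑ i, |hD.eigenvalues i| := by
  set V : Matrix n n ℂ := (hD.eigenvectorUnitary : Matrix n n ℂ) with hVdef
  have hV1 : star V * V = 1 := Unitary.coe_star_mul_self hD.eigenvectorUnitary
  have h1 : (B * D).trace
      = ∑ i, (star V * B * V) i i * (hD.eigenvalues i : ℂ) := by
    conv_lhs => rw [hD.spectral_theorem, Unitary.conjStarAlgAut_apply]
    rw [← hVdef]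
    have : B * (V * diagonal (RCLike.ofReal ∘ hD.eigenvalues) * star V)
        = (B * V) * diagonal (RCLike.ofReal ∘ hD.eigenvalues) * star V := by
      simp only [mul_assoc]
    rw [this, trace_mul_cycle]
    rw [Matrix.trace]
    congr 1 with i
    rw [diag_apply, ← mul_assoc, mul_diagonal]
    rfl
  have h2 : ∀ i, (star V * B * V) i i = star (fun a => V a i) ⬝ᵥ B *ᵥ (fun a => V a i) := by
    intro i
    simp only [mul_apply, dotProduct, mulVec, Pi.star_apply, star_apply]
    simp_rw [Finset.sum_mul, Finset.mul_sum]
    rw [Finset.sum_comm]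
    congr 1 with a
    congr 1 with b
    ring
  have h3 : ∀ i, star (fun a => V a i) ⬝ᵥ (fun a => V a i) = (1 : ℂ) := by
    intro i
    have : star (fun a => V a i) ⬝ᵥ (fun a => V a i) = (star V * V) i i := by
      simp only [mul_apply, dotProduct, Pi.star_apply, star_apply]
    rw [this, hV1, one_apply_eq]
  have h4 : ((B * D).trace).re = ∑ i, ((star V * B * V) i i).re * hD.eigenvalues i := by
    rw [h1, Complex.re_sum]
    congr 1 with i
    simp [Complex.mul_re]
  rw [h4]
  calc |∑ i, ((star V * B * V) i i).re * hD.eigenvalues i|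
      ≤ ∑ i, |((star V * B * V) i i).re * hD.eigenvalues i| := Finset.abs_sum_le_sum_abs _ _
    _ ≤ ∑ i, m * |hD.eigenvalues i| := by
        refine Finset.sum_le_sum fun i _ => ?_
        rw [abs_mul]
        refine mul_le_mul_of_nonneg_right ?_ (abs_nonneg _)
        rw [h2 i]
        exact hB _ (h3 i)
    _ = m * ∑ i, |hD.eigenvalues i| := by rw [Finset.mul_sum]

lemma re_dot_conjTranspose (M : Matrix n n ℂ) (u : n → ℂ) :
    (star u ⬝ᵥ Mᴴ *ᵥ u).re = (star u ⬝ᵥ M *ᵥ u).re := by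
  have : star u ⬝ᵥ Mᴴ *ᵥ u = star (star u ⬝ᵥ M *ᵥ u) := by
    simp only [dotProduct, mulVec, conjTranspose_apply, Pi.star_apply, star_sum, star_mul',
      Finset.mul_sum]
    rw [Finset.sum_comm]
    congr 1 with a
    congr 1 with b
    simp only [star_star]
    ring
  rw [this, Complex.star_def, Complex.conj_re]

lemma re_dot_psd {A : Matrix n n ℂ} (hA : A.PosSemidef) (u : n → ℂ) :
    0 ≤ (star u ⬝ᵥ A *ᵥ u).re :=
  hA.re_dotProduct_nonneg u

lemma dot_one {u : n → ℂ} (hu : star u ⬝ᵥ u = 1) :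
    (star u ⬝ᵥ (1 : Matrix n n ℂ) *ᵥ u) = 1 := by rw [one_mulVec, hu]

lemma re_dot_le_one {ρ : Matrix n n ℂ} (hρ : ρ.PosSemidef) (htr : ρ.trace = 1)
    {u : n → ℂ} (hu : star u ⬝ᵥ u = 1) : (star u ⬝ᵥ ρ *ᵥ u).re ≤ 1 := by
  have h := re_dot_psd (one_sub_posSemidef hρ htr) u
  rw [sub_mulVec, dotProduct_sub, dot_one hu, Complex.sub_re, Complex.one_re] at h
  linarith

lemma re_dot_sq_le {ρ : Matrix n n ℂ} (hρ : ρ.PosSemidef) (htr : ρ.trace = 1)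
    (u : n → ℂ) : (star u ⬝ᵥ (ρ * ρ) *ᵥ u).re ≤ (star u ⬝ᵥ ρ *ᵥ u).re := by
  have h := re_dot_psd (sub_sq_posSemidef hρ htr) u
  rw [sub_mulVec, dotProduct_sub, Complex.sub_re] at h
  linarith

lemma re_dot_sq_nonneg {ρ : Matrix n n ℂ} (hρ : ρ.IsHermitian) (u : n → ℂ) :
    0 ≤ (star u ⬝ᵥ (ρ * ρ) *ᵥ u).re := by
  have : ρ * ρ = ρᴴ * ρ := by rw [hρ.eq]
  rw [this]
  exact re_dot_psd (posSemidef_conjTranspose_mul_self ρ) u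

lemma cross_bound {ψ σ : Matrix n n ℂ} (hψ : ψ.PosSemidef) (hσ : σ.PosSemidef)
    (u : n → ℂ) :
    2 * |(star u ⬝ᵥ (σ * ψ) *ᵥ u).re|
      ≤ (star u ⬝ᵥ (σ * σ) *ᵥ u).re + (star u ⬝ᵥ (ψ * ψ) *ᵥ u).re := by
  have hps : (star u ⬝ᵥ (ψ * σ) *ᵥ u).re = (star u ⬝ᵥ (σ * ψ) *ᵥ u).re := by
    have : ψ * σ = (σ * ψ)ᴴ := by rw [conjTranspose_mul, hψ.1.eq, hσ.1.eq]
    rw [this, re_dot_conjTranspose]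
  have hminus : ((σ - ψ)ᴴ * (σ - ψ)).PosSemidef := posSemidef_conjTranspose_mul_self _
  have hplus : ((σ + ψ)ᴴ * (σ + ψ)).PosSemidef := posSemidef_conjTranspose_mul_self _
  have em : (σ - ψ)ᴴ * (σ - ψ) = σ * σ - σ * ψ - ψ * σ + ψ * ψ := by
    rw [conjTranspose_sub, hψ.1.eq, hσ.1.eq]
    noncomm_ring
  have ep : (σ + ψ)ᴴ * (σ + ψ) = σ * σ + σ * ψ + ψ * σ + ψ * ψ := by
    rw [conjTranspose_add, hψ.1.eq, hσ.1.eq]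
    noncomm_ring
  have h1 := re_dot_psd hminus u
  have h2 := re_dot_psd hplus u
  rw [em] at h1
  rw [ep] at h2
  simp only [sub_mulVec, add_mulVec, dotProduct_sub, dotProduct_add, Complex.sub_re,
    Complex.add_re] at h1 h2
  rw [hps] at h1 h2
  rcases abs_cases (star u ⬝ᵥ (σ * ψ) *ᵥ u).re with ⟨h, _⟩ | ⟨h, _⟩ <;> rw [h] <;> linarith

lemma bound_quad {ψ σ : Matrix n n ℂ} (hψ : ψ.PosSemidef) (hψtr : ψ.trace = 1)
    (hσ : σ.PosSemidef) (hσtr : σ.trace = 1) :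
    ∀ u : n → ℂ, star u ⬝ᵥ u = 1 →
      |(star u ⬝ᵥ (ψ + σ - 1) *ᵥ u).re| ≤ 1 := by
  intro u hu
  have h1 : 0 ≤ (star u ⬝ᵥ ψ *ᵥ u).re := re_dot_psd hψ u
  have h2 : (star u ⬝ᵥ ψ *ᵥ u).re ≤ 1 := re_dot_le_one hψ hψtr hu
  have h3 : 0 ≤ (star u ⬝ᵥ σ *ᵥ u).re := re_dot_psd hσ u
  have h4 : (star u ⬝ᵥ σ *ᵥ u).re ≤ 1 := re_dot_le_one hσ hσtr hu
  simp only [sub_mulVec, add_mulVec, dotProduct_sub, dotProduct_add, dot_one hu,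
    Complex.sub_re, Complex.add_re, Complex.one_re]
  rw [abs_le]
  constructor <;> linarith

lemma bound_cubic {ψ σ : Matrix n n ℂ} (hψ : ψ.PosSemidef) (hψtr : ψ.trace = 1)
    (hσ : σ.PosSemidef) (hσtr : σ.trace = 1) :
    ∀ u : n → ℂ, star u ⬝ᵥ u = 1 →
      |(star u ⬝ᵥ (ψ * ψ + σ * ψ + σ * σ - ((3/2 : ℂ) • 1)) *ᵥ u).re| ≤ 3/2 := by
  intro u hu
  have hp2 : 0 ≤ (star u ⬝ᵥ (ψ * ψ) *ᵥ u).re := re_dot_sq_nonneg hψ.1 u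
  have hp2' : (star u ⬝ᵥ (ψ * ψ) *ᵥ u).re ≤ 1 :=
    (re_dot_sq_le hψ hψtr u).trans (re_dot_le_one hψ hψtr hu)
  have hs2 : 0 ≤ (star u ⬝ᵥ (σ * σ) *ᵥ u).re := re_dot_sq_nonneg hσ.1 u
  have hs2' : (star u ⬝ᵥ (σ * σ) *ᵥ u).re ≤ 1 :=
    (re_dot_sq_le hσ hσtr u).trans (re_dot_le_one hσ hσtr hu)
  have hx := cross_bound hψ hσ u
  have hx' := abs_nonneg (star u ⬝ᵥ (σ * ψ) *ᵥ u).re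
  have hsm : ((star u ⬝ᵥ ((3/2 : ℂ) • (1 : Matrix n n ℂ)) *ᵥ u)).re = 3/2 := by
    rw [smul_mulVec, dotProduct_smul, one_mulVec, hu]
    simp
  simp only [sub_mulVec, add_mulVec, dotProduct_sub, dotProduct_add,
    Complex.sub_re, Complex.add_re, hsm]
  rw [abs_le]
  rcases abs_cases (star u ⬝ᵥ (σ * ψ) *ᵥ u).re with ⟨h, _⟩ | ⟨h, _⟩ <;>
    constructor <;> linarith

lemma trace_quad_identity (ψ σ : Matrix n n ℂ) :
    ((ψ + σ - 1) * (ψ - σ)).trace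
      = (ψ ^ 2).trace - (σ ^ 2).trace - (ψ.trace - σ.trace) := by
  have c1 : (ψ * σ).trace = (σ * ψ).trace := trace_mul_comm _ _
  simp only [sub_mul, add_mul, mul_sub, one_mul, trace_sub, trace_add, pow_two]
  linear_combination (-1:ℂ) * c1

lemma trace_cubic_identity (ψ σ : Matrix n n ℂ) :
    ((ψ * ψ + σ * ψ + σ * σ - ((3/2 : ℂ) • 1)) * (ψ - σ)).trace
      = (ψ ^ 3).trace - (σ ^ 3).trace - (3/2 : ℂ) * (ψ.trace - σ.trace) := by
  have c1 : (ψ * ψ * σ).trace = (σ * ψ * ψ).trace := by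
    rw [trace_mul_cycle]
  have c2 : (σ * ψ * σ).trace = (σ * σ * ψ).trace := by
    rw [trace_mul_cycle]
  have h3 : ψ ^ 3 = ψ * ψ * ψ := by rw [pow_succ, pow_two]
  have h3' : σ ^ 3 = σ * σ * σ := by rw [pow_succ, pow_two]
  simp only [sub_mul, add_mul, mul_sub, one_mul, smul_mul_assoc, trace_sub, trace_add,
    trace_smul, h3, h3', smul_eq_mul]
  linear_combination (-1:ℂ) * c1 + (-1:ℂ) * c2

lemma key_ineq {ψ σ : Matrix n n ℂ} (hψ : ψ.PosSemidef) (hψtr : ψ.trace = 1)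
    (hσ : σ.PosSemidef) (hσtr : σ.trace = 1)
    (hflat : σ * σ = ((σ.rank : ℂ))⁻¹ • σ) :
    ((ψ ^ 3).trace).re - (((ψ ^ 2).trace).re) ^ 2 ≤ 4 * traceNorm (ψ - σ) := by
  have hD : (ψ - σ).IsHermitian := hψ.1.sub hσ.1
  set N1 : ℝ := ∑ i, |hD.eigenvalues i| with hN1
  have hTN : traceNorm (ψ - σ) = N1 := traceNorm_hermitian hD
  have hN1nonneg : 0 ≤ N1 := Finset.sum_nonneg fun i _ => abs_nonneg _
  -- rank quantities
  set qr : ℝ := ((σ.rank : ℝ))⁻¹ with hqr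
  have hc : ((σ.rank : ℂ))⁻¹ = ((qr : ℝ) : ℂ) := by rw [hqr]; push_cast; ring
  have hq0 : 0 ≤ qr := by positivity
  have hq1 : qr ≤ 1 := by
    rcases Nat.eq_zero_or_pos σ.rank with h | h
    · simp [hqr, h]
    · rw [hqr]
      have h1 : (1:ℝ) ≤ (σ.rank : ℝ) := by exact_mod_cast h
      rw [inv_le_one_iff₀]
      right
      exact h1
  have hσ2 : (σ ^ 2).trace = ((qr : ℝ) : ℂ) := by
    rw [pow_two, hflat, trace_smul, hσtr, smul_eq_mul, mul_one, hc]
  have hσ3 : (σ ^ 3).trace = (((qr ^ 2 : ℝ)) : ℂ) := by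
    have : σ ^ 3 = ((σ.rank : ℂ))⁻¹ • (((σ.rank : ℂ))⁻¹ • σ) := by
      rw [pow_succ, pow_two, hflat, smul_mul_assoc, hflat]
    rw [this, trace_smul, trace_smul, hσtr, hc]
    simp only [smul_eq_mul, mul_one]
    push_cast
    ring
  -- quadratic comparison
  have e2 := trace_quad_identity ψ σ
  rw [hψtr, hσtr, sub_self, sub_zero] at e2
  have h2 := re_trace_mul_le (ψ + σ - 1) hD (bound_quad hψ hψtr hσ hσtr)
  rw [e2] at h2
  rw [hσ2] at h2
  set a : ℝ := ((ψ ^ 2).trace).re with ha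
  have h2' : |a - qr| ≤ N1 := by
    have : ((ψ ^ 2).trace - ((qr : ℝ) : ℂ)).re = a - qr := by
      rw [Complex.sub_re, Complex.ofReal_re, ha]
    rw [this] at h2
    linarith [h2]
  -- cubic comparison
  have e3 := trace_cubic_identity ψ σ
  rw [hψtr, hσtr, sub_self, mul_zero, sub_zero] at e3
  have h3 := re_trace_mul_le _ hD (bound_cubic hψ hψtr hσ hσtr)
  rw [e3, hσ3] at h3
  set b : ℝ := ((ψ ^ 3).trace).re with hb
  have h3' : b - qr ^ 2 ≤ (3/2) * N1 := by
    have : ((ψ ^ 3).trace - ((qr ^ 2 : ℝ) : ℂ)).re = b - qr ^ 2 := by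
      rw [Complex.sub_re, Complex.ofReal_re, hb]
    rw [this] at h3
    have := (abs_le.mp h3).2
    linarith
  -- bounds on a
  have ha0 : 0 ≤ a := by
    have : ψ ^ 2 = ψᴴ * ψ := by rw [pow_two, hψ.1.eq]
    rw [ha, this]
    exact re_trace_nonneg (posSemidef_conjTranspose_mul_self ψ)
  have ha1 : a ≤ 1 := by
    have h := re_trace_nonneg (sub_sq_posSemidef hψ hψtr)
    rw [trace_sub, hψtr, Complex.sub_re, Complex.one_re, ← pow_two] at h
    linarith
  -- conclude
  rw [hTN]
  have habs := abs_le.mp h2'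
  have hprod : (qr - a) * (qr + a) ≤ N1 * (qr + a) :=
    mul_le_mul_of_nonneg_right (by linarith) (by linarith)
  have hprod2 : N1 * (qr + a) ≤ N1 * 2 :=
    mul_le_mul_of_nonneg_left (by linarith) hN1nonneg
  nlinarith [h3', hprod, hprod2]

end AntiFlatAux

/-- Let `ψ` and `σ` be density matrices on `ℂ^N` with `σ` flat
(`σ² = σ / rank σ`), and let `T = (1/2)‖ψ − σ‖₁` be their trace distance. Then the
anti-flatness of `ψ` satisfies `F(ψ) = Tr(ψ³) − (Tr(ψ²))² ≤ 8T`; consequently the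
anti-flatness of any density matrix is at most `8` times its minimal trace distance to the
set of flat density matrices. -/
theorem antiFlatness_le_eight_mul_traceDist {N : ℕ} (ψ σ : Matrix (Fin N) (Fin N) ℂ)
    (hψ : ψ.PosSemidef) (hψtr : ψ.trace = 1)
    (hσ : σ.PosSemidef) (hσtr : σ.trace = 1)
    (hflat : σ * σ = ((σ.rank : ℂ))⁻¹ • σ) :
    antiFlatness ψ ≤ 8 * ((1 : ℝ) / 2 * traceNorm (ψ - σ)) ∧
      antiFlatness ψ ≤ 8 * sInf {t : ℝ | ∃ τ : Matrix (Fin N) (Fin N) ℂ,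
        τ.PosSemidef ∧ τ.trace = 1 ∧ τ * τ = ((τ.rank : ℂ))⁻¹ • τ ∧
          t = 1 / 2 * traceNorm (ψ - τ)} := by
  have key : ∀ τ : Matrix (Fin N) (Fin N) ℂ, τ.PosSemidef → τ.trace = 1 →
      τ * τ = ((τ.rank : ℂ))⁻¹ • τ → antiFlatness ψ ≤ 4 * traceNorm (ψ - τ) := by
    intro τ h1 h2 h3
    exact AntiFlatAux.key_ineq hψ hψtr h1 h2 h3
  constructor
  · have := key σ hσ hσtr hflat
    linarith
  · set S : Set ℝ := {t : ℝ | ∃ τ : Matrix (Fin N) (Fin N) ℂ,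
      τ.PosSemidef ∧ τ.trace = 1 ∧ τ * τ = ((τ.rank : ℂ))⁻¹ • τ ∧
        t = 1 / 2 * traceNorm (ψ - τ)} with hS
    have hne : S.Nonempty := ⟨1 / 2 * traceNorm (ψ - σ), σ, hσ, hσtr, hflat, rfl⟩
    have hlb : ∀ t ∈ S, antiFlatness ψ / 8 ≤ t := by
      rintro t ⟨τ, h1, h2, h3, rfl⟩
      have := key τ h1 h2 h3
      linarith
    have := le_csInf hne hlb
    linarith
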